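/- For r ∈ (0,1) with r^k > 3/5 (k a positive integer), there exists a ∈ (0,1) such that a r^k + (1−a²) r^{2k}/(1−r^k) > 1. Consequently the radius (3/5)^{1/k} in the refined Bohr inequality for functions vanishing at the origin is sharp, witnessed by f*_a(z) = z(a−z)/(1−az) and ω(z) = z^k. -/

import Mathlib

/-- Sharpness of the radius `(3/5)^{1/k}`: if `r ∈ (0,1)` with `r^k > 3/5`, then there is
`a ∈ (0,1)` such that `a r^k + (1-a²) r^{2k}/(1-r^k) > 1`. -/
theorem stmt_11 (k : ℕ) (hk : 1 ≤ k) (r : ℝ) (hr : r ∈ Set.Ioo (0 : ℝ) 1)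
    (hrk : (3 : ℝ) / 5 < r ^ k) :
    ∃ a : ℝ, a ∈ Set.Ioo (0 : ℝ) 1 ∧
      1 < a * r ^ k + (1 - a ^ 2) * r ^ (2 * k) / (1 - r ^ k) := by
  obtain ⟨hr0, hr1⟩ := hr
  set t := r ^ k with ht
  have ht0 : 0 < t := pow_pos hr0 k
  have ht1 : t < 1 := pow_lt_one₀ hr0.le hr1 (by omega)
  have h1t : (0:ℝ) < 1 - t := by linarith
  refine ⟨(1 - t) / (2 * t), ⟨by positivity, ?_⟩, ?_⟩
  · rw [div_lt_one (by linarith)]; linarith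
  · have h2 : r ^ (2 * k) = t ^ 2 := by rw [two_mul, pow_add, ← ht]; ring
    rw [h2]
    rw [show ((1 - t) / (2 * t)) * t + (1 - ((1 - t) / (2 * t)) ^ 2) * t ^ 2 / (1 - t)
        = (1 - t) / 4 + t ^ 2 / (1 - t) from by field_simp; ring]
    rw [show (1 - t) / 4 + t ^ 2 / (1 - t) = ((1 - t) ^ 2 + 4 * t ^ 2) / (4 * (1 - t)) from by
      field_simp, lt_div_iff₀ (by positivity)]
    nlinarith
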